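/- For all t > 0: coth²(t) - 1/3 - (16/81)t² ≤ coth(t)/t ≤ coth²(t) - 1/3. -/

import Mathlib

open Real

private lemma nonneg_of_hasDerivAt (f f' : ℝ → ℝ) (hd : ∀ x, HasDerivAt f (f' x) x)
    (h0 : f 0 = 0) (hf' : ∀ x, 0 ≤ x → 0 ≤ f' x) : ∀ x, 0 ≤ x → 0 ≤ f x := by
  intro x hx
  have hmono : MonotoneOn f (Set.Ici (0:ℝ)) :=
    monotoneOn_of_deriv_nonneg (convex_Ici 0)
      (fun y _ => (hd y).continuousAt.continuousWithinAt)
      (fun y _ => (hd y).differentiableAt.differentiableWithinAt)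
      (fun y hy => by
        rw [(hd y).deriv]
        exact hf' y (le_of_lt (by simpa using hy)))
  calc (0:ℝ) = f 0 := h0.symm
    _ ≤ f x := hmono Set.self_mem_Ici hx hx

-- Level 2 helper for key1 : u cosh u - sinh u ≥ 0
private lemma aux_g2 : ∀ x : ℝ, 0 ≤ x → 0 ≤ x * Real.cosh x - Real.sinh x := by
  apply nonneg_of_hasDerivAt _ (fun x => x * Real.sinh x)
  · intro x
    have h := ((hasDerivAt_id x).mul (Real.hasDerivAt_cosh x)).sub (Real.hasDerivAt_sinh x)
    refine h.congr_deriv ?_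
    simp only [id_eq]
    ring
  · simp
  · intro x hx
    exact mul_nonneg hx (Real.sinh_nonneg_iff.2 hx)

-- Level 1 helper for key1 : 2 - 2 cosh u + u sinh u ≥ 0
private lemma aux_g1 : ∀ x : ℝ, 0 ≤ x → 0 ≤ 2 - 2 * Real.cosh x + x * Real.sinh x := by
  apply nonneg_of_hasDerivAt _ (fun x => x * Real.cosh x - Real.sinh x)
  · intro x
    have h := ((hasDerivAt_const x (2:ℝ)).sub
        ((hasDerivAt_const x (2:ℝ)).mul (Real.hasDerivAt_cosh x))).add
        ((hasDerivAt_id x).mul (Real.hasDerivAt_sinh x))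
    refine h.congr_deriv ?_
    simp only [id_eq]
    ring
  · simp
  · exact aux_g2

/-- key1: 3 sinh u ≤ 2u + u cosh u for u ≥ 0 -/
private lemma key1 : ∀ x : ℝ, 0 ≤ x → 0 ≤ 2 * x + x * Real.cosh x - 3 * Real.sinh x := by
  apply nonneg_of_hasDerivAt _ (fun x => 2 - 2 * Real.cosh x + x * Real.sinh x)
  · intro x
    have h := (((hasDerivAt_const x (2:ℝ)).mul (hasDerivAt_id x)).add
        ((hasDerivAt_id x).mul (Real.hasDerivAt_cosh x))).sub
        ((hasDerivAt_const x (3:ℝ)).mul (Real.hasDerivAt_sinh x))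
    refine h.congr_deriv ?_
    simp only [id_eq]
    ring
  · simp
  · exact aux_g1

-- Level 2 helper for key2 (ψ'')
private lemma aux_p2 : ∀ x : ℝ, 0 ≤ x →
    0 ≤ 4/9 * x * (Real.cosh x - 1) + 4/9 * x^2 * Real.sinh x
        + 2/27 * x^3 * Real.cosh x + Real.sinh x - x * Real.cosh x := by
  apply nonneg_of_hasDerivAt _ (fun x => 4/9 * (Real.cosh x - 1) + 1/3 * x * Real.sinh x
      + 2/3 * x^2 * Real.cosh x + 2/27 * x^3 * Real.sinh x)
  · intro x
    have h1 : HasDerivAt (fun x : ℝ => 4/9 * x * (Real.cosh x - 1))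
        (4/9 * (Real.cosh x - 1) + 4/9 * x * Real.sinh x) x := by
      have := ((hasDerivAt_id x).const_mul (4/9 : ℝ)).mul ((Real.hasDerivAt_cosh x).sub_const 1)
      refine this.congr_deriv ?_
      simp only [id_eq]
      ring
    have h2 : HasDerivAt (fun x : ℝ => 4/9 * x^2 * Real.sinh x)
        (8/9 * x * Real.sinh x + 4/9 * x^2 * Real.cosh x) x := by
      have := ((hasDerivAt_pow 2 x).const_mul (4/9 : ℝ)).mul (Real.hasDerivAt_sinh x)
      refine this.congr_deriv ?_
      push_cast
      ring
    have h3 : HasDerivAt (fun x : ℝ => 2/27 * x^3 * Real.cosh x)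
        (2/9 * x^2 * Real.cosh x + 2/27 * x^3 * Real.sinh x) x := by
      have := ((hasDerivAt_pow 3 x).const_mul (2/27 : ℝ)).mul (Real.hasDerivAt_cosh x)
      refine this.congr_deriv ?_
      push_cast
      ring
    have h4 : HasDerivAt (fun x : ℝ => x * Real.cosh x)
        (Real.cosh x + x * Real.sinh x) x := by
      have := (hasDerivAt_id x).mul (Real.hasDerivAt_cosh x)
      refine this.congr_deriv ?_
      simp only [id_eq]
      ring
    have h := ((h1.add h2).add h3).add (Real.hasDerivAt_sinh x) |>.sub h4
    refine h.congr_deriv ?_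
    ring
  · simp
  · intro x hx
    have h1 : (1:ℝ) ≤ Real.cosh x := Real.one_le_cosh x
    have h2 : (0:ℝ) ≤ Real.sinh x := Real.sinh_nonneg_iff.2 hx
    have h3 : (0:ℝ) ≤ x^2 := sq_nonneg x
    have h4 : (0:ℝ) ≤ x^3 := pow_nonneg hx 3
    nlinarith [mul_nonneg hx h2, mul_nonneg h3 (le_trans zero_le_one h1),
      mul_nonneg h4 h2]

-- Level 1 helper for key2 (ψ')
private lemma aux_p1 : ∀ x : ℝ, 0 ≤ x →
    0 ≤ 2 * Real.cosh x - 2 + 2/9 * x^2 * (Real.cosh x - 1)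
        + 2/27 * x^3 * Real.sinh x - x * Real.sinh x := by
  apply nonneg_of_hasDerivAt _ (fun x => 4/9 * x * (Real.cosh x - 1)
      + 4/9 * x^2 * Real.sinh x + 2/27 * x^3 * Real.cosh x
      + Real.sinh x - x * Real.cosh x)
  · intro x
    have h1 : HasDerivAt (fun x : ℝ => 2 * Real.cosh x - 2) (2 * Real.sinh x) x :=
      ((Real.hasDerivAt_cosh x).const_mul (2:ℝ)).sub_const 2
    have h2 : HasDerivAt (fun x : ℝ => 2/9 * x^2 * (Real.cosh x - 1))
        (4/9 * x * (Real.cosh x - 1) + 2/9 * x^2 * Real.sinh x) x := by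
      have := ((hasDerivAt_pow 2 x).const_mul (2/9 : ℝ)).mul ((Real.hasDerivAt_cosh x).sub_const 1)
      refine this.congr_deriv ?_
      push_cast
      ring
    have h3 : HasDerivAt (fun x : ℝ => 2/27 * x^3 * Real.sinh x)
        (2/9 * x^2 * Real.sinh x + 2/27 * x^3 * Real.cosh x) x := by
      have := ((hasDerivAt_pow 3 x).const_mul (2/27 : ℝ)).mul (Real.hasDerivAt_sinh x)
      refine this.congr_deriv ?_
      push_cast
      ring
    have h4 : HasDerivAt (fun x : ℝ => x * Real.sinh x)
        (Real.sinh x + x * Real.cosh x) x := by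
      have := (hasDerivAt_id x).mul (Real.hasDerivAt_sinh x)
      refine this.congr_deriv ?_
      simp only [id_eq]
      ring
    have h := ((h1.add h2).add h3).sub h4
    refine h.congr_deriv ?_
    ring
  · simp
  · exact aux_p2

/-- key2: 2u + u cosh u ≤ 3 sinh u + (2/27) u³ (cosh u - 1) for u ≥ 0 -/
private lemma key2 : ∀ x : ℝ, 0 ≤ x →
    0 ≤ 3 * Real.sinh x + 2/27 * x^3 * (Real.cosh x - 1) - 2*x - x * Real.cosh x := by
  apply nonneg_of_hasDerivAt _ (fun x => 2 * Real.cosh x - 2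
      + 2/9 * x^2 * (Real.cosh x - 1) + 2/27 * x^3 * Real.sinh x - x * Real.sinh x)
  · intro x
    have h1 : HasDerivAt (fun x : ℝ => 3 * Real.sinh x) (3 * Real.cosh x) x :=
      (Real.hasDerivAt_sinh x).const_mul 3
    have h2 : HasDerivAt (fun x : ℝ => 2/27 * x^3 * (Real.cosh x - 1))
        (2/9 * x^2 * (Real.cosh x - 1) + 2/27 * x^3 * Real.sinh x) x := by
      have := ((hasDerivAt_pow 3 x).const_mul (2/27 : ℝ)).mul ((Real.hasDerivAt_cosh x).sub_const 1)
      refine this.congr_deriv ?_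
      push_cast
      ring
    have h3 : HasDerivAt (fun x : ℝ => 2 * x) (2:ℝ) x := by
      have := (hasDerivAt_id x).const_mul (2:ℝ)
      refine this.congr_deriv ?_
      ring
    have h4 : HasDerivAt (fun x : ℝ => x * Real.cosh x)
        (Real.cosh x + x * Real.sinh x) x := by
      have := (hasDerivAt_id x).mul (Real.hasDerivAt_cosh x)
      refine this.congr_deriv ?_
      simp only [id_eq]
      ring
    have h := ((h1.add h2).sub h3).sub h4
    refine h.congr_deriv ?_
    ring
  · simp
  · exact aux_p1

theorem simpson_stmt16 (t : ℝ) (ht : 0 < t) :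
    (Real.cosh t / Real.sinh t) ^ 2 - 1 / 3 - 16 / 81 * t ^ 2 ≤
        (Real.cosh t / Real.sinh t) / t ∧
      (Real.cosh t / Real.sinh t) / t ≤ (Real.cosh t / Real.sinh t) ^ 2 - 1 / 3 := by
  set s := Real.sinh t with hs_def
  set c := Real.cosh t with hc_def
  have hs : 0 < s := Real.sinh_pos_iff.2 ht
  have hc : 0 < c := Real.cosh_pos t
  have hcs : c ^ 2 = 1 + s ^ 2 := by rw [hc_def, hs_def, Real.cosh_sq]; ring
  have h2t : (0:ℝ) ≤ 2 * t := by linarith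
  have hsinh2t : Real.sinh (2 * t) = 2 * s * c := Real.sinh_two_mul t
  have hcosh2t : Real.cosh (2 * t) = 1 + 2 * s ^ 2 := by
    rw [Real.cosh_two_mul, hcs]; ring
  have hk1 := key1 (2 * t) h2t
  have hk2 := key2 (2 * t) h2t
  rw [hsinh2t, hcosh2t] at hk1 hk2
  have H1 : 3 * s * c ≤ 3 * t + 2 * t * s ^ 2 := by nlinarith [hk1]
  have H2 : 3 * t + 2 * t * s ^ 2 ≤ 3 * s * c + 16/27 * t ^ 3 * s ^ 2 := by nlinarith [hk2]
  constructor
  · have e : (c / s) / t - ((c / s) ^ 2 - 1 / 3 - 16 / 81 * t ^ 2) =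
        (3 * c * s + t * s ^ 2 + 16/27 * t ^ 3 * s ^ 2 - 3 * t * c ^ 2) / (3 * t * s ^ 2) := by
      field_simp
      ring
    have hnum : 0 ≤ 3 * c * s + t * s ^ 2 + 16/27 * t ^ 3 * s ^ 2 - 3 * t * c ^ 2 := by
      rw [hcs]; nlinarith [H2]
    have hden : 0 < 3 * t * s ^ 2 := by positivity
    nlinarith [div_nonneg hnum hden.le, e]
  · have e : ((c / s) ^ 2 - 1 / 3) - (c / s) / t =
        (3 * t * c ^ 2 - t * s ^ 2 - 3 * c * s) / (3 * t * s ^ 2) := by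
      field_simp
    have hnum : 0 ≤ 3 * t * c ^ 2 - t * s ^ 2 - 3 * c * s := by
      rw [hcs]; nlinarith [H1]
    have hden : 0 < 3 * t * s ^ 2 := by positivity
    nlinarith [div_nonneg hnum hden.le, e]
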